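/- arXiv:1903.11275 — 2 statements merged into one kernel-verified Lean document; each statement's English description precedes it below -/
import Mathlib

section
/- (Proposition 1, exact form.) Let d ≥ 1, T > 0, r ∈ ℝ, let Π be a symmetric positive definite real d×d matrix, let σ_f ∈ ℝ, σ_l > 0, let z^1,…,z^Q ∈ ℝ^d and ω_1,…,ω_Q ∈ ℝ, and define u^GPR(z) = Σ_{q=1}^Q ω_q k_SE(z^q, z). Then e^{-rT} ∫_{ℝ^d} u^GPR(z) dN(0, T·Π)(z) = e^{-rT} Σ_{q=1}^Q ω_q σ_f² σ_l^d · exp(-(1/2)(z^q)ᵀ (T·Π + σ_l² I_d)⁻¹ z^q) / √(det(T·Π + σ_l² I_d)), where I_d denotes the d×d identity matrix. -/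
open MeasureTheory Real Matrix

/-- The multivariate Gaussian probability measure on `ι → ℝ` with mean `μ` and covariance
matrix `S`: for `S` symmetric positive definite, its density with respect to the Lebesgue
measure is `z ↦ (2π)^(-d/2) det(S)^(-1/2) exp(-(1/2)(z-μ)ᵀ S⁻¹ (z-μ))`. -/
noncomputable def mvGaussian {ι : Type*} [Fintype ι] [DecidableEq ι]
    (μ : ι → ℝ) (S : Matrix ι ι ℝ) : Measure (ι → ℝ) :=
  (volume : Measure (ι → ℝ)).withDensity fun z =>
    ENNReal.ofReal ((2 * π) ^ (-(Fintype.card ι : ℝ) / 2) * S.det ^ (-(1 : ℝ) / 2) *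
      Real.exp (-(1 / 2) * ((z - μ) ⬝ᵥ S⁻¹.mulVec (z - μ))))

/-- The Squared Exponential kernel with signal variance `σf²` and length-scale `σl`:
`k_SE(x, x') = σf² exp(-‖x - x'‖²/(2σl²))`. -/
noncomputable def kSE {ι : Type*} [Fintype ι] (σf σl : ℝ) (x x' : ι → ℝ) : ℝ :=
  σf ^ 2 * Real.exp (-(∑ i, (x i - x' i) ^ 2) / (2 * σl ^ 2))

open scoped ENNReal NNReal

variable {d : ℕ}

lemma psd_det_nonneg {C : Matrix (Fin d) (Fin d) ℝ} (h : C.PosSemidef) : 0 ≤ C.det := by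
  rw [h.isHermitian.det_eq_prod_eigenvalues]
  exact Finset.prod_nonneg fun i _ => h.eigenvalues_nonneg i

lemma herm_transpose {C : Matrix (Fin d) (Fin d) ℝ} (h : C.IsHermitian) : Cᵀ = C := by
  rw [← Matrix.conjTranspose_eq_transpose_of_trivial]; exact h

section SqrtPort
open scoped MatrixOrder

noncomputable def Matrix.PosSemidef.sqrt {B : Matrix (Fin d) (Fin d) ℝ} (_hB : B.PosSemidef) :
    Matrix (Fin d) (Fin d) ℝ :=
  CFC.sqrt B

lemma Matrix.PosSemidef.posSemidef_sqrt {B : Matrix (Fin d) (Fin d) ℝ} (hB : B.PosSemidef) :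
    hB.sqrt.PosSemidef :=
  Matrix.nonneg_iff_posSemidef.mp (CFC.sqrt_nonneg B)

lemma Matrix.PosSemidef.sqrt_mul_self {B : Matrix (Fin d) (Fin d) ℝ} (hB : B.PosSemidef) :
    hB.sqrt * hB.sqrt = B :=
  CFC.sqrt_mul_sqrt_self B hB.nonneg

end SqrtPort

lemma quad_cont (M : Matrix (Fin d) (Fin d) ℝ) (μ : Fin d → ℝ) :
    Continuous fun x : Fin d → ℝ => (x - μ) ⬝ᵥ M.mulVec (x - μ) := by
  simp only [dotProduct, Matrix.mulVec]
  fun_prop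

lemma quad_eq_sum_sq {B : Matrix (Fin d) (Fin d) ℝ} (hB : B.PosDef) (x : Fin d → ℝ) :
    x ⬝ᵥ B.mulVec x = ∑ i, (hB.posSemidef.sqrt.mulVec x i) ^ 2 := by
  set C := hB.posSemidef.sqrt with hC
  have hsym : Cᵀ = C := herm_transpose hB.posSemidef.posSemidef_sqrt.isHermitian
  have hmul : C * C = B := hB.posSemidef.sqrt_mul_self
  calc x ⬝ᵥ B.mulVec x = x ⬝ᵥ (C * C).mulVec x := by rw [hmul]
    _ = (C.mulVec x) ⬝ᵥ (C.mulVec x) := by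
        rw [← Matrix.mulVec_mulVec, Matrix.dotProduct_mulVec, ← Matrix.mulVec_transpose, hsym]
    _ = ∑ i, (C.mulVec x i) ^ 2 := by
        simp [dotProduct, sq]

lemma sqrt_det_eq {B : Matrix (Fin d) (Fin d) ℝ} (hB : B.PosDef) :
    hB.posSemidef.sqrt.det = Real.sqrt B.det := by
  have h1 : hB.posSemidef.sqrt.det * hB.posSemidef.sqrt.det = B.det := by
    rw [← Matrix.det_mul, hB.posSemidef.sqrt_mul_self]
  have h2 : 0 ≤ hB.posSemidef.sqrt.det := psd_det_nonneg hB.posSemidef.posSemidef_sqrt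
  rw [← h1, ← sq, Real.sqrt_sq h2]

noncomputable def gProd (d : ℕ) : (Fin d → ℝ) → ℝ := fun y => ∏ i, Real.exp (-(1/2) * (y i)^2)

lemma gProd_eq {B : Matrix (Fin d) (Fin d) ℝ} (hB : B.PosDef) (x : Fin d → ℝ) :
    Real.exp (-(1/2) * (x ⬝ᵥ B.mulVec x)) = gProd d (hB.posSemidef.sqrt.mulVec x) := by
  rw [quad_eq_sum_sq hB, gProd, Finset.mul_sum, Real.exp_sum]

lemma gProd_integrable : Integrable (gProd d) := by
  unfold gProd
  exact Integrable.fintype_prod (f := fun (i : Fin d) (t : ℝ) => Real.exp (-(1/2) * t^2)) fun i => by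
    simpa [neg_mul] using integrable_exp_neg_mul_sq (by norm_num : (0:ℝ) < 1/2)

lemma gProd_integral : ∫ y, gProd d y = Real.sqrt (2*π) ^ d := by
  unfold gProd
  rw [integral_fintype_prod_volume_eq_pow (ι := Fin d) (f := fun t : ℝ => Real.exp (-(1/2) * t^2))]
  have : ∫ t : ℝ, Real.exp (-(1/2) * t^2) = Real.sqrt (2*π) := by
    rw [integral_gaussian]
    norm_num [mul_comm]
  rw [this]
  simp

lemma sqrt_det_ne {B : Matrix (Fin d) (Fin d) ℝ} (hB : B.PosDef) :
    hB.posSemidef.sqrt.det ≠ 0 := by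
  rw [sqrt_det_eq hB]
  exact (Real.sqrt_pos.mpr hB.det_pos).ne'

lemma gauss_quad_integral {B : Matrix (Fin d) (Fin d) ℝ} (hB : B.PosDef) :
    ∫ x : Fin d → ℝ, Real.exp (-(1/2) * (x ⬝ᵥ B.mulVec x))
      = Real.sqrt (2*π) ^ d / Real.sqrt B.det := by
  have hdet := sqrt_det_ne hB
  have hmap := Real.map_matrix_volume_pi_eq_smul_volume_pi hdet
  have hco : Continuous (Matrix.toLin' hB.posSemidef.sqrt : (Fin d → ℝ) → Fin d → ℝ) :=
    LinearMap.continuous_on_pi _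
  have hgc : Continuous (gProd d) := by
    unfold gProd; fun_prop
  calc ∫ x : Fin d → ℝ, Real.exp (-(1/2) * (x ⬝ᵥ B.mulVec x))
      = ∫ x : Fin d → ℝ, gProd d (Matrix.toLin' hB.posSemidef.sqrt x) := by
        simp_rw [Matrix.toLin'_apply]; exact integral_congr_ae (.of_forall fun x => gProd_eq hB x)
    _ = ∫ y, gProd d y ∂(Measure.map (Matrix.toLin' hB.posSemidef.sqrt) volume) := by
        rw [integral_map hco.aemeasurable hgc.aestronglyMeasurable]
    _ = |hB.posSemidef.sqrt.det|⁻¹ * Real.sqrt (2*π) ^ d := by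
        rw [hmap, integral_smul_measure, gProd_integral,
          ENNReal.toReal_ofReal (by positivity), smul_eq_mul, abs_inv]
    _ = Real.sqrt (2*π) ^ d / Real.sqrt B.det := by
        rw [sqrt_det_eq hB, abs_of_nonneg (Real.sqrt_nonneg _)]
        ring

lemma gauss_quad_integrable {B : Matrix (Fin d) (Fin d) ℝ} (hB : B.PosDef) :
    Integrable (fun x : Fin d → ℝ => Real.exp (-(1/2) * (x ⬝ᵥ B.mulVec x))) := by
  have hdet := sqrt_det_ne hB
  have hmap := Real.map_matrix_volume_pi_eq_smul_volume_pi hdet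
  have hco : Continuous (Matrix.toLin' hB.posSemidef.sqrt : (Fin d → ℝ) → Fin d → ℝ) :=
    LinearMap.continuous_on_pi _
  have hgc : Continuous (gProd d) := by unfold gProd; fun_prop
  have h1 : Integrable (gProd d) (Measure.map (Matrix.toLin' hB.posSemidef.sqrt) volume) := by
    rw [hmap]
    exact (gProd_integrable).smul_measure ENNReal.ofReal_ne_top
  have h2 := (integrable_map_measure hgc.aestronglyMeasurable hco.aemeasurable).mp h1
  refine h2.congr (.of_forall fun x => ?_)
  simp only [Function.comp, Matrix.toLin'_apply]
  exact (gProd_eq hB x).symm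

lemma gauss_shift_integral {B : Matrix (Fin d) (Fin d) ℝ} (hB : B.PosDef) (μ : Fin d → ℝ) :
    ∫ x : Fin d → ℝ, Real.exp (-(1/2) * ((x - μ) ⬝ᵥ B.mulVec (x - μ)))
      = Real.sqrt (2*π) ^ d / Real.sqrt B.det := by
  rw [integral_sub_right_eq_self
    (fun x : Fin d → ℝ => Real.exp (-(1/2) * (x ⬝ᵥ B.mulVec x))) μ]
  exact gauss_quad_integral hB

lemma gauss_shift_integrable {B : Matrix (Fin d) (Fin d) ℝ} (hB : B.PosDef) (μ : Fin d → ℝ) :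
    Integrable (fun x : Fin d → ℝ => Real.exp (-(1/2) * ((x - μ) ⬝ᵥ B.mulVec (x - μ)))) :=
  (gauss_quad_integrable hB).comp_sub_right μ

section MatrixAlg
variable {S : Matrix (Fin d) (Fin d) ℝ} {σl : ℝ}

lemma smul_one_posDef (hσl : 0 < σl) : ((σl^2)⁻¹ • (1 : Matrix (Fin d) (Fin d) ℝ)).PosDef := by
  rw [Matrix.posDef_iff_dotProduct_mulVec]
  constructor
  · simp [Matrix.IsHermitian]
  · intro x hx
    simp only [Matrix.smul_mulVec, Matrix.one_mulVec, dotProduct_smul,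
      smul_eq_mul, RCLike.star_def]
    have : 0 < star x ⬝ᵥ x := by
      simpa using (Matrix.PosDef.one (n := Fin d) (R := ℝ)).dotProduct_mulVec_pos hx
    positivity

lemma B_posDef (hS : S.PosDef) (hσl : 0 < σl) :
    (S⁻¹ + (σl^2)⁻¹ • (1 : Matrix (Fin d) (Fin d) ℝ)).PosDef :=
  hS.inv.add_posSemidef (smul_one_posDef hσl).posSemidef

lemma S_mul_B (hS : S.PosDef) :
    S * (S⁻¹ + (σl^2)⁻¹ • (1 : Matrix (Fin d) (Fin d) ℝ))
      = 1 + (σl^2)⁻¹ • S := by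
  rw [Matrix.mul_add, Matrix.mul_nonsing_inv S hS.det_pos.ne'.isUnit, Matrix.mul_smul, mul_one]

lemma key_inv (hS : S.PosDef) (hσl : 0 < σl) :
    (S + σl^2 • (1 : Matrix (Fin d) (Fin d) ℝ))⁻¹
      = (σl^2)⁻¹ • (1 : Matrix (Fin d) (Fin d) ℝ)
        - ((σl^2)⁻¹)^2 • (S⁻¹ + (σl^2)⁻¹ • (1 : Matrix (Fin d) (Fin d) ℝ))⁻¹ := by
  set c : ℝ := (σl^2)⁻¹ with hc
  have hc0 : σl^2 ≠ 0 := by positivity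
  set B := S⁻¹ + c • (1 : Matrix (Fin d) (Fin d) ℝ) with hBdef
  have hBinv : B * B⁻¹ = 1 :=
    Matrix.mul_nonsing_inv B (B_posDef hS hσl).det_pos.ne'.isUnit
  have hfact : S + σl^2 • (1 : Matrix (Fin d) (Fin d) ℝ) = σl^2 • (S * B) := by
    rw [S_mul_B hS, smul_add, smul_smul, mul_inv_cancel₀ hc0, one_smul, add_comm]
  apply Matrix.inv_eq_right_inv
  rw [hfact, Matrix.mul_sub]
  rw [Matrix.smul_mul, Matrix.mul_smul, Matrix.smul_mul, Matrix.mul_smul]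
  rw [Matrix.mul_one, Matrix.mul_assoc S _ _, hBinv, Matrix.mul_one]
  rw [smul_smul, smul_smul]
  rw [mul_inv_cancel₀ hc0]
  have : σl ^ 2 * c ^ 2 = c := by rw [hc]; field_simp
  rw [this, one_smul, S_mul_B hS, add_sub_cancel_right]

lemma det_prod_eq (hS : S.PosDef) (hσl : 0 < σl) :
    S.det * (S⁻¹ + (σl^2)⁻¹ • (1 : Matrix (Fin d) (Fin d) ℝ)).det
      = ((σl^2)⁻¹)^d * (S + σl^2 • (1 : Matrix (Fin d) (Fin d) ℝ)).det := by
  rw [← Matrix.det_mul, S_mul_B hS]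
  have h1 : (1 : Matrix (Fin d) (Fin d) ℝ) + (σl^2)⁻¹ • S
      = (σl^2)⁻¹ • (S + σl^2 • (1 : Matrix (Fin d) (Fin d) ℝ)) := by
    rw [smul_add, smul_smul, inv_mul_cancel₀ (by positivity : (σl:ℝ)^2 ≠ 0), one_smul, add_comm]
  rw [h1, Matrix.det_smul, Fintype.card_fin]

end MatrixAlg

section Square
variable {S : Matrix (Fin d) (Fin d) ℝ} {σl : ℝ}

lemma complete_square (hS : S.PosDef) (hσl : 0 < σl) (m x : Fin d → ℝ) :
    x ⬝ᵥ S⁻¹.mulVec x + (σl^2)⁻¹ * ((m - x) ⬝ᵥ (m - x))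
      = (x - (σl^2)⁻¹ • (S⁻¹ + (σl^2)⁻¹ • (1 : Matrix (Fin d) (Fin d) ℝ))⁻¹.mulVec m) ⬝ᵥ
          (S⁻¹ + (σl^2)⁻¹ • (1 : Matrix (Fin d) (Fin d) ℝ)).mulVec
          (x - (σl^2)⁻¹ • (S⁻¹ + (σl^2)⁻¹ • (1 : Matrix (Fin d) (Fin d) ℝ))⁻¹.mulVec m)
        + m ⬝ᵥ (S + σl^2 • (1 : Matrix (Fin d) (Fin d) ℝ))⁻¹.mulVec m := by
  set c : ℝ := (σl^2)⁻¹ with hc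
  set B := S⁻¹ + c • (1 : Matrix (Fin d) (Fin d) ℝ) with hBdef
  set μ := c • B⁻¹.mulVec m with hμ
  have hBB : B * B⁻¹ = 1 := Matrix.mul_nonsing_inv B (B_posDef hS hσl).det_pos.ne'.isUnit
  have hBμ : B.mulVec μ = c • m := by
    rw [hμ, Matrix.mulVec_smul, Matrix.mulVec_mulVec, hBB, Matrix.one_mulVec]
  have hsymB : ∀ v w : Fin d → ℝ, v ⬝ᵥ B.mulVec w = w ⬝ᵥ B.mulVec v := by
    intro v w
    rw [Matrix.dotProduct_mulVec, ← Matrix.mulVec_transpose,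
      herm_transpose (B_posDef hS hσl).isHermitian, dotProduct_comm]
  have e1 : (x - μ) ⬝ᵥ B.mulVec (x - μ)
      = x ⬝ᵥ B.mulVec x - 2*(c*(x ⬝ᵥ m)) + c^2 * (m ⬝ᵥ B⁻¹.mulVec m) := by
    rw [Matrix.mulVec_sub, dotProduct_sub, sub_dotProduct,
      sub_dotProduct, hBμ, hsymB μ x, hBμ]
    rw [hμ]
    simp only [dotProduct_smul, smul_dotProduct, smul_eq_mul]
    rw [dotProduct_comm (B⁻¹.mulVec m) m]
    ring
  have e2 : x ⬝ᵥ B.mulVec x = x ⬝ᵥ S⁻¹.mulVec x + c * (x ⬝ᵥ x) := by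
    rw [hBdef, Matrix.add_mulVec, dotProduct_add, Matrix.smul_mulVec,
      Matrix.one_mulVec, dotProduct_smul, smul_eq_mul]
  have e3 : m ⬝ᵥ (S + σl^2 • (1 : Matrix (Fin d) (Fin d) ℝ))⁻¹.mulVec m
      = c * (m ⬝ᵥ m) - c^2 * (m ⬝ᵥ B⁻¹.mulVec m) := by
    rw [key_inv hS hσl, Matrix.sub_mulVec, dotProduct_sub,
      Matrix.smul_mulVec, Matrix.one_mulVec, Matrix.smul_mulVec,
      dotProduct_smul, dotProduct_smul, smul_eq_mul, smul_eq_mul]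
  have e4 : (m - x) ⬝ᵥ (m - x) = m ⬝ᵥ m - 2*(x ⬝ᵥ m) + x ⬝ᵥ x := by
    rw [dotProduct_sub, sub_dotProduct, sub_dotProduct,
      dotProduct_comm m x]
    ring
  rw [e4, e1, e2, e3]
  ring

end Square

section PerQ
variable {S : Matrix (Fin d) (Fin d) ℝ} {σl : ℝ}

lemma density_kse_eq (hS : S.PosDef) (hσl : 0 < σl) (σf : ℝ) (m x : Fin d → ℝ) :
    ((2*π) ^ (-(d:ℝ)/2) * S.det ^ (-(1:ℝ)/2) * Real.exp (-(1/2) * (x ⬝ᵥ S⁻¹.mulVec x)))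
      * (σf^2 * Real.exp (-(∑ i, (m i - x i)^2) / (2*σl^2)))
    = ((2*π) ^ (-(d:ℝ)/2) * S.det ^ (-(1:ℝ)/2) * σf^2 *
        Real.exp (-(1/2) * (m ⬝ᵥ (S + σl^2 • (1 : Matrix (Fin d) (Fin d) ℝ))⁻¹.mulVec m)))
      * Real.exp (-(1/2) *
          ((x - (σl^2)⁻¹ • (S⁻¹ + (σl^2)⁻¹ • (1 : Matrix (Fin d) (Fin d) ℝ))⁻¹.mulVec m) ⬝ᵥ
            (S⁻¹ + (σl^2)⁻¹ • (1 : Matrix (Fin d) (Fin d) ℝ)).mulVec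
            (x - (σl^2)⁻¹ • (S⁻¹ + (σl^2)⁻¹ • (1 : Matrix (Fin d) (Fin d) ℝ))⁻¹.mulVec m))) := by
  have hsum : (∑ i, (m i - x i)^2) = (m - x) ⬝ᵥ (m - x) := by
    simp [dotProduct, sq]
  have hdiv : -((m - x) ⬝ᵥ (m - x)) / (2*σl^2)
      = -(1/2) * ((σl^2)⁻¹ * ((m - x) ⬝ᵥ (m - x))) := by
    field_simp
  have hexp : -(1/2) * (x ⬝ᵥ S⁻¹.mulVec x) + -(∑ i, (m i - x i)^2) / (2*σl^2)
      = -(1/2) * (m ⬝ᵥ (S + σl^2 • (1 : Matrix (Fin d) (Fin d) ℝ))⁻¹.mulVec m)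
        + -(1/2) *
          ((x - (σl^2)⁻¹ • (S⁻¹ + (σl^2)⁻¹ • (1 : Matrix (Fin d) (Fin d) ℝ))⁻¹.mulVec m) ⬝ᵥ
            (S⁻¹ + (σl^2)⁻¹ • (1 : Matrix (Fin d) (Fin d) ℝ)).mulVec
            (x - (σl^2)⁻¹ • (S⁻¹ + (σl^2)⁻¹ • (1 : Matrix (Fin d) (Fin d) ℝ))⁻¹.mulVec m)) := by
    rw [hsum, hdiv, ← mul_add, complete_square hS hσl m x]
    ring
  have h2 := congrArg Real.exp hexp
  rw [Real.exp_add, Real.exp_add] at h2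
  linear_combination ((2*π) ^ (-(d:ℝ)/2) * S.det ^ (-(1:ℝ)/2) * σf^2) * h2

lemma const_eq (hS : S.PosDef) (hσl : 0 < σl) :
    (2*π) ^ (-(d:ℝ)/2) * S.det ^ (-(1:ℝ)/2) *
      (Real.sqrt (2*π) ^ d /
        Real.sqrt (S⁻¹ + (σl^2)⁻¹ • (1 : Matrix (Fin d) (Fin d) ℝ)).det)
    = σl ^ d / Real.sqrt (S + σl^2 • (1 : Matrix (Fin d) (Fin d) ℝ)).det := by
  have h2π : (0:ℝ) < 2*π := by positivity
  have hdS := hS.det_pos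
  have hdB := (B_posDef hS hσl).det_pos
  have hdSum : 0 < (S + σl^2 • (1 : Matrix (Fin d) (Fin d) ℝ)).det := by
    have h1 : (σl^2 • (1 : Matrix (Fin d) (Fin d) ℝ)).PosDef := by
      have := smul_one_posDef (d := d) (σl := σl⁻¹) (by positivity)
      simpa using this
    exact (hS.add h1).det_pos
  have e1 : (2*π) ^ (-(d:ℝ)/2) * Real.sqrt (2*π) ^ d = 1 := by
    rw [Real.sqrt_eq_rpow, ← Real.rpow_natCast ((2*π) ^ ((1:ℝ)/2)) d, ← Real.rpow_mul h2π.le,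
      ← Real.rpow_add h2π, show (-(d:ℝ)/2 + 1/2*(d:ℝ)) = 0 by ring, Real.rpow_zero]
  have e2 : S.det ^ (-(1:ℝ)/2) = (Real.sqrt S.det)⁻¹ := by
    rw [Real.sqrt_eq_rpow, ← Real.rpow_neg_one (S.det ^ ((1:ℝ)/2)), ← Real.rpow_mul hdS.le]
    norm_num
  have e3 : Real.sqrt S.det * Real.sqrt (S⁻¹ + (σl^2)⁻¹ • (1 : Matrix (Fin d) (Fin d) ℝ)).det
      = (σl⁻¹)^d * Real.sqrt (S + σl^2 • (1 : Matrix (Fin d) (Fin d) ℝ)).det := by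
    have hpow : ((σl^2)⁻¹ : ℝ)^d = ((σl⁻¹)^d)^2 := by
      rw [← inv_pow, ← pow_mul, ← pow_mul, mul_comm 2 d]
    rw [← Real.sqrt_mul hdS.le, det_prod_eq hS hσl, hpow,
      Real.sqrt_mul (by positivity), Real.sqrt_sq (by positivity)]
  have hp : (0:ℝ) < Real.sqrt S.det := Real.sqrt_pos.mpr hdS
  have hq : (0:ℝ) < Real.sqrt (S⁻¹ + (σl^2)⁻¹ • (1 : Matrix (Fin d) (Fin d) ℝ)).det :=
    Real.sqrt_pos.mpr hdB
  have hr : (0:ℝ) < Real.sqrt (S + σl^2 • (1 : Matrix (Fin d) (Fin d) ℝ)).det :=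
    Real.sqrt_pos.mpr hdSum
  rw [e2]
  have hre : (2*π) ^ (-(d:ℝ)/2) * (Real.sqrt S.det)⁻¹ *
      (Real.sqrt (2*π) ^ d / Real.sqrt (S⁻¹ + (σl^2)⁻¹ • (1 : Matrix (Fin d) (Fin d) ℝ)).det)
      = ((2*π) ^ (-(d:ℝ)/2) * Real.sqrt (2*π) ^ d) /
        (Real.sqrt S.det * Real.sqrt (S⁻¹ + (σl^2)⁻¹ • (1 : Matrix (Fin d) (Fin d) ℝ)).det) := by
    ring
  rw [hre, e1, e3, inv_pow]
  field_simp

lemma perq_integrand_eq (hS : S.PosDef) (hσl : 0 < σl) (σf : ℝ) (m : Fin d → ℝ) :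
    (fun x : Fin d → ℝ =>
      ((2*π) ^ (-(d:ℝ)/2) * S.det ^ (-(1:ℝ)/2) * Real.exp (-(1/2) * (x ⬝ᵥ S⁻¹.mulVec x)))
        * (σf ^ 2 * Real.exp (-(∑ i, (m i - x i) ^ 2) / (2 * σl ^ 2))))
    = fun x : Fin d → ℝ =>
      ((2*π) ^ (-(d:ℝ)/2) * S.det ^ (-(1:ℝ)/2) * σf^2 *
        Real.exp (-(1/2) * (m ⬝ᵥ (S + σl^2 • (1 : Matrix (Fin d) (Fin d) ℝ))⁻¹.mulVec m)))
      * Real.exp (-(1/2) *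
          ((x - (σl^2)⁻¹ • (S⁻¹ + (σl^2)⁻¹ • (1 : Matrix (Fin d) (Fin d) ℝ))⁻¹.mulVec m) ⬝ᵥ
            (S⁻¹ + (σl^2)⁻¹ • (1 : Matrix (Fin d) (Fin d) ℝ)).mulVec
            (x - (σl^2)⁻¹ • (S⁻¹ + (σl^2)⁻¹ • (1 : Matrix (Fin d) (Fin d) ℝ))⁻¹.mulVec m))) :=
  funext fun x => density_kse_eq hS hσl σf m x

lemma perq_integrable (hS : S.PosDef) (hσl : 0 < σl) (σf : ℝ) (m : Fin d → ℝ) :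
    Integrable (fun x : Fin d → ℝ =>
      ((2*π) ^ (-(d:ℝ)/2) * S.det ^ (-(1:ℝ)/2) * Real.exp (-(1/2) * (x ⬝ᵥ S⁻¹.mulVec x)))
        * (σf ^ 2 * Real.exp (-(∑ i, (m i - x i) ^ 2) / (2 * σl ^ 2)))) := by
  rw [perq_integrand_eq hS hσl σf m]
  exact (gauss_shift_integrable (B_posDef hS hσl) _).const_mul _

lemma perq_integral (hS : S.PosDef) (hσl : 0 < σl) (σf : ℝ) (m : Fin d → ℝ) :
    ∫ x : Fin d → ℝ,
      ((2*π) ^ (-(d:ℝ)/2) * S.det ^ (-(1:ℝ)/2) * Real.exp (-(1/2) * (x ⬝ᵥ S⁻¹.mulVec x)))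
        * (σf ^ 2 * Real.exp (-(∑ i, (m i - x i) ^ 2) / (2 * σl ^ 2)))
    = σf ^ 2 * σl ^ d *
        Real.exp (-(1/2) * (m ⬝ᵥ (S + σl^2 • (1 : Matrix (Fin d) (Fin d) ℝ))⁻¹.mulVec m))
        / Real.sqrt (S + σl^2 • (1 : Matrix (Fin d) (Fin d) ℝ)).det := by
  rw [perq_integrand_eq hS hσl σf m, MeasureTheory.integral_const_mul,
    gauss_shift_integral (B_posDef hS hσl)]
  have := const_eq (d := d) hS hσl
  calc (2*π) ^ (-(d:ℝ)/2) * S.det ^ (-(1:ℝ)/2) * σf^2 *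
        Real.exp (-(1/2) * (m ⬝ᵥ (S + σl^2 • (1 : Matrix (Fin d) (Fin d) ℝ))⁻¹.mulVec m)) *
        (Real.sqrt (2*π) ^ d /
          Real.sqrt (S⁻¹ + (σl^2)⁻¹ • (1 : Matrix (Fin d) (Fin d) ℝ)).det)
      = ((2*π) ^ (-(d:ℝ)/2) * S.det ^ (-(1:ℝ)/2) *
          (Real.sqrt (2*π) ^ d /
            Real.sqrt (S⁻¹ + (σl^2)⁻¹ • (1 : Matrix (Fin d) (Fin d) ℝ)).det)) * (σf^2 *
          Real.exp (-(1/2) * (m ⬝ᵥ (S + σl^2 • (1 : Matrix (Fin d) (Fin d) ℝ))⁻¹.mulVec m))) := by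
        ring
    _ = _ := by rw [this]; ring

end PerQ

lemma posDef_smul' {Pm : Matrix (Fin d) (Fin d) ℝ} (hPm : Pm.PosDef) {T : ℝ} (hT : 0 < T) :
    (T • Pm).PosDef := by
  rw [Matrix.posDef_iff_dotProduct_mulVec]
  constructor
  · show (T • Pm)ᴴ = T • Pm
    rw [Matrix.conjTranspose_smul, star_trivial, hPm.isHermitian]
  · intro x hx
    have h1 : (star x) ⬝ᵥ (T • Pm).mulVec x = T * ((star x) ⬝ᵥ Pm.mulVec x) := by
      rw [Matrix.smul_mulVec, dotProduct_smul, smul_eq_mul]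
    rw [h1]
    exact mul_pos hT (hPm.dotProduct_mulVec_pos hx)
/-- Proposition 1 (exact form): the discounted integral of the GPR approximation
`u^GPR(z) = Σ_q ω_q k_SE(z^q, z)` against the Gaussian measure `N(0, T·Π)` is given
by the GPR-EI closed formula. -/
theorem GPR_EI_formula
    (d : ℕ) (hd : 1 ≤ d) (T : ℝ) (hT : 0 < T) (r : ℝ)
    (Pm : Matrix (Fin d) (Fin d) ℝ) (hPm : Pm.PosDef)
    (σf σl : ℝ) (hσl : 0 < σl)
    (Q : ℕ) (z : Fin Q → Fin d → ℝ) (ω : Fin Q → ℝ) :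
    Real.exp (-r * T) * ∫ x, (∑ q, ω q * kSE σf σl (z q) x) ∂(mvGaussian 0 (T • Pm))
    = Real.exp (-r * T) *
        ∑ q, ω q * σf ^ 2 * σl ^ d *
          Real.exp (-(1 / 2) *
            (z q ⬝ᵥ (T • Pm + σl ^ 2 • (1 : Matrix (Fin d) (Fin d) ℝ))⁻¹.mulVec (z q))) /
          Real.sqrt (T • Pm + σl ^ 2 • (1 : Matrix (Fin d) (Fin d) ℝ)).det := by
  have hS : (T • Pm).PosDef := posDef_smul' hPm hT
  set S := T • Pm with hSdef
  set D : (Fin d → ℝ) → ℝ := fun x =>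
    (2*π) ^ (-(d:ℝ)/2) * S.det ^ (-(1:ℝ)/2) *
      Real.exp (-(1/2) * (x ⬝ᵥ S⁻¹.mulVec x)) with hD
  have hDpos : ∀ x, 0 ≤ D x := by
    intro x
    have h1 : (0:ℝ) < (2*π) ^ (-(d:ℝ)/2) := Real.rpow_pos_of_pos (by positivity) _
    have h2 : (0:ℝ) < S.det ^ (-(1:ℝ)/2) := Real.rpow_pos_of_pos hS.det_pos _
    positivity
  have hDcont : Continuous D := by
    apply Continuous.mul continuous_const
    apply Real.continuous_exp.comp
    apply Continuous.mul continuous_const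
    simpa using quad_cont (S⁻¹) 0
  have hmeas : Measurable fun x => Real.toNNReal (D x) :=
    hDcont.measurable.real_toNNReal
  have hμeq : mvGaussian (0 : Fin d → ℝ) S
      = (volume : Measure (Fin d → ℝ)).withDensity fun x => ((Real.toNNReal (D x) : ℝ≥0) : ℝ≥0∞) := by
    unfold mvGaussian
    congr 1
    funext x
    rw [ENNReal.ofReal]
    congr 2
    simp [hD, Fintype.card_fin]
  rw [hμeq, integral_withDensity_eq_integral_smul hmeas]
  congr 1
  have hptw : ∀ x : Fin d → ℝ,
      (Real.toNNReal (D x)) • (∑ q, ω q * kSE σf σl (z q) x)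
        = ∑ q, ω q * (D x * kSE σf σl (z q) x) := by
    intro x
    rw [NNReal.smul_def, Real.coe_toNNReal _ (hDpos x), smul_eq_mul, Finset.mul_sum]
    exact Finset.sum_congr rfl fun q _ => by ring
  rw [integral_congr_ae (.of_forall hptw)]
  rw [integral_finset_sum _ (fun q _ => by
    have := (perq_integrable (σl := σl) hS hσl σf (z q)).const_mul (ω q)
    exact this)]
  refine Finset.sum_congr rfl fun q _ => ?_
  rw [MeasureTheory.integral_const_mul]
  have hint := perq_integral (σl := σl) hS hσl σf (z q)
  have : ∫ x, D x * kSE σf σl (z q) x = σf ^ 2 * σl ^ d *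
        Real.exp (-(1/2) * (z q ⬝ᵥ (S + σl^2 • (1 : Matrix (Fin d) (Fin d) ℝ))⁻¹.mulVec (z q)))
        / Real.sqrt (S + σl^2 • (1 : Matrix (Fin d) (Fin d) ℝ)).det := by
    rw [← hint]
    rfl
  rw [this]
  ring
end

section
/- (Conditional covariance and independence for a Gaussian vector.) Let P, M ≥ 1, let A be a symmetric positive definite real P×P matrix, C a symmetric real M×M matrix and B a real M×P matrix such that the (P+M)×(P+M) block matrix [[A, Bᵀ],[B, C]] is symmetric positive semidefinite. Let (Y, F) be an ℝ^P × ℝ^M-valued random vector whose joint law is the multivariate Gaussian measure on ℝ^{P+M} with mean 0 and covariance [[A, Bᵀ],[B, C]]. Then the random vector F - B A⁻¹ Y is independent of Y, and its law is the multivariate Gaussian measure on ℝ^M with mean 0 and covariance C - B A⁻¹ Bᵀ. -/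
open MeasureTheory Real Matrix ProbabilityTheory

open scoped ENNReal


lemma GPR.map_withDensity {α β : Type*} [MeasurableSpace α] [MeasurableSpace β]
    (T : α ≃ᵐ β) (μ : Measure α) (ρ : α → ℝ≥0∞) (hρ : Measurable ρ) :
    Measure.map T (μ.withDensity ρ) = (Measure.map T μ).withDensity (fun b => ρ (T.symm b)) := by
  ext s hs
  rw [Measure.map_apply T.measurable hs, withDensity_apply _ (T.measurable hs),
    withDensity_apply _ hs]
  rw [show (fun b => ρ (T.symm b)) = ρ ∘ T.symm from rfl,
    setLIntegral_map hs (hρ.comp T.symm.measurable) T.measurable]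
  simp only [Function.comp, MeasurableEquiv.symm_apply_apply]

lemma GPR.withDensity_prod {α β : Type*} [MeasurableSpace α] [MeasurableSpace β]
    (μ : Measure α) (ν : Measure β) [SigmaFinite μ] [SigmaFinite ν]
    (f : α → ℝ≥0∞) (g : β → ℝ≥0∞) (hf : Measurable f) (hg : Measurable g)
    [SigmaFinite (μ.withDensity f)] [SigmaFinite (ν.withDensity g)] :
    (μ.withDensity f).prod (ν.withDensity g)
      = (μ.prod ν).withDensity (fun z => f z.1 * g z.2) := by
  refine Measure.prod_eq fun s t hs ht => ?_
  rw [withDensity_apply _ (hs.prod ht), ← Measure.prod_restrict,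
    withDensity_apply _ hs, withDensity_apply _ ht,
    lintegral_prod_mul hf.aemeasurable hg.aemeasurable]

lemma GPR.posDef_of_posSemidef_det_ne_zero {n : Type*} [Fintype n] [DecidableEq n]
    {M : Matrix n n ℝ} (hM : M.PosSemidef) (hdet : M.det ≠ 0) : M.PosDef := by
  refine posDef_iff_dotProduct_mulVec.mpr ⟨hM.isHermitian, fun x hx => ?_⟩
  rcases ((posSemidef_iff_dotProduct_mulVec.mp hM).2 x).lt_or_eq with h | h
  · exact h
  · exfalso
    have h0 : M *ᵥ x = 0 := (hM.dotProduct_mulVec_zero_iff x).mp h.symm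
    have hinj : Function.Injective M.mulVec :=
      Matrix.mulVec_injective_iff_isUnit.mpr ((Matrix.isUnit_iff_isUnit_det M).mpr hdet.isUnit)
    exact hx (hinj (by simpa using h0))

open scoped MatrixOrder in
lemma GPR.isProbability_mvGaussian {n : ℕ} (M : Matrix (Fin n) (Fin n) ℝ) (hM : M.PosDef) :
    IsProbabilityMeasure (mvGaussian (0 : Fin n → ℝ) M) := by
  constructor
  have hdetM : 0 < M.det := hM.det_pos
  have hN : M⁻¹.PosDef := hM.inv
  set R := CFC.sqrt M⁻¹ with hRdef
  have hR : R.PosSemidef := (CFC.sqrt_nonneg M⁻¹).posSemidef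
  have hRR : R * R = M⁻¹ := CFC.sqrt_mul_sqrt_self M⁻¹ hN.posSemidef.nonneg
  have hRsym : Rᵀ = R := by
    have := hR.isHermitian
    rwa [Matrix.IsHermitian, Matrix.conjTranspose_eq_transpose_of_trivial] at this
  have detR2 : R.det ^ 2 = M.det⁻¹ := by
    rw [pow_two, ← Matrix.det_mul, hRR, Matrix.det_nonsing_inv, Ring.inverse_eq_inv']
  have hdetRne : R.det ≠ 0 := by
    intro h
    rw [h] at detR2
    simp only [ne_eq, zero_pow, OfNat.ofNat_ne_zero, not_false_eq_true] at detR2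
    exact (inv_pos.mpr hdetM).ne' detR2.symm
  have absdetR : |R.det| = Real.sqrt M.det⁻¹ := by
    rw [← Real.sqrt_sq_eq_abs, detR2]
  -- quadratic form identity
  have quad : ∀ z : Fin n → ℝ, z ⬝ᵥ M⁻¹ *ᵥ z = ∑ i, (R *ᵥ z) i ^ 2 := by
    intro z
    have h1 : M⁻¹ *ᵥ z = R *ᵥ (R *ᵥ z) := by rw [Matrix.mulVec_mulVec, hRR]
    have h2 : z ᵥ* R = R *ᵥ z := by
      conv_lhs => rw [← hRsym]
      rw [Matrix.vecMul_transpose]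
    rw [h1, Matrix.dotProduct_mulVec, h2, dotProduct]
    exact Finset.sum_congr rfl fun i _ => (pow_two _).symm
  -- the one-dim gaussian function
  set g : (Fin n → ℝ) → ℝ≥0∞ :=
    fun u => ENNReal.ofReal (Real.exp (-(1 / 2) * ∑ i, u i ^ 2)) with hgdef
  have hgcont : Continuous fun u : Fin n → ℝ => Real.exp (-(1 / 2) * ∑ i, u i ^ 2) := by
    fun_prop
  have hgmeas : Measurable g := ENNReal.measurable_ofReal.comp hgcont.measurable
  have hTmeas : Measurable (Matrix.toLin' R) :=
    (LinearMap.continuous_of_finiteDimensional _).measurable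
  have hmap := Real.map_matrix_volume_pi_eq_smul_volume_pi hdetRne
  -- 1D integrability and value
  have hint1 : Integrable (fun x : ℝ => Real.exp (-(1/2 : ℝ) * x ^ 2)) :=
    integrable_exp_neg_mul_sq (by norm_num)
  have hintn : Integrable (fun u : Fin n → ℝ => ∏ i, Real.exp (-(1/2 : ℝ) * u i ^ 2)) :=
    Integrable.fin_nat_prod (fun i => hint1)
  have hprodform : ∀ u : Fin n → ℝ,
      Real.exp (-(1 / 2) * ∑ i, u i ^ 2) = ∏ i, Real.exp (-(1/2 : ℝ) * u i ^ 2) := by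
    intro u
    rw [Finset.mul_sum, Real.exp_sum]
  have hK : ∫⁻ u, g u = ENNReal.ofReal (Real.sqrt (π / (1/2)) ^ n) := by
    simp only [hgdef]
    have : ∀ u : Fin n → ℝ, ENNReal.ofReal (Real.exp (-(1 / 2) * ∑ i, u i ^ 2))
        = ENNReal.ofReal (∏ i, Real.exp (-(1/2 : ℝ) * u i ^ 2)) := fun u => by rw [hprodform]
    simp_rw [this]
    rw [← MeasureTheory.ofReal_integral_eq_lintegral_ofReal hintn
      (Filter.Eventually.of_forall fun u => Finset.prod_nonneg fun i _ => (Real.exp_pos _).le)]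
    congr 1
    rw [volume_pi, MeasureTheory.integral_fin_nat_prod_eq_prod (f := fun (i : Fin n) (x : ℝ) =>
      Real.exp (-(1/2 : ℝ) * x ^ 2))]
    rw [integral_gaussian, Finset.prod_const, Finset.card_univ, Fintype.card_fin]
  -- change of variables
  have hchg : ∫⁻ z, ENNReal.ofReal (Real.exp (-(1 / 2) * (z ⬝ᵥ M⁻¹ *ᵥ z)))
      = ENNReal.ofReal |R.det⁻¹| * ∫⁻ u, g u := by
    have heq : ∀ z, ENNReal.ofReal (Real.exp (-(1 / 2) * (z ⬝ᵥ M⁻¹ *ᵥ z)))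
        = g (Matrix.toLin' R z) := by
      intro z; simp only [hgdef, Matrix.toLin'_apply, quad]
    simp_rw [heq]
    rw [← lintegral_map hgmeas hTmeas, hmap, lintegral_smul_measure, smul_eq_mul]
  -- key real identity
  have h2pi : (0:ℝ) < 2 * π := by positivity
  have hx : (0:ℝ) < M.det ^ (-(1:ℝ)/2) := Real.rpow_pos_of_pos hdetM _
  have e1 : Real.sqrt M.det⁻¹ = M.det ^ (-(1:ℝ)/2) := by
    rw [show M.det⁻¹ = M.det ^ (-1:ℝ) by rw [Real.rpow_neg_one],
      Real.sqrt_eq_rpow, ← Real.rpow_mul hdetM.le]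
    norm_num
  have e2 : Real.sqrt (π/(1/2)) ^ n = (2*π) ^ ((n:ℝ)/2) := by
    rw [show π / (1/2) = 2*π by ring, Real.sqrt_eq_rpow,
      ← Real.rpow_natCast ((2*π) ^ ((1:ℝ)/2)) n, ← Real.rpow_mul h2pi.le,
      show (1:ℝ)/2 * (n:ℝ) = (n:ℝ)/2 by ring]
  have key : (2 * π) ^ (-(n : ℝ) / 2) * M.det ^ (-(1 : ℝ) / 2) *
      (|R.det⁻¹| * Real.sqrt (π / (1/2)) ^ n) = 1 := by
    rw [abs_inv, absdetR, e1, e2]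
    have h2 : (2*π) ^ (-(n:ℝ)/2) * (2*π) ^ ((n:ℝ)/2) = 1 := by
      rw [← Real.rpow_add h2pi, show -(n:ℝ)/2 + (n:ℝ)/2 = 0 by ring, Real.rpow_zero]
    calc (2 * π) ^ (-(n:ℝ)/2) * M.det ^ (-(1:ℝ)/2) *
          ((M.det ^ (-(1:ℝ)/2))⁻¹ * (2*π) ^ ((n:ℝ)/2))
        = ((2*π) ^ (-(n:ℝ)/2) * (2*π) ^ ((n:ℝ)/2)) *
          (M.det ^ (-(1:ℝ)/2) * (M.det ^ (-(1:ℝ)/2))⁻¹) := by ring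
      _ = 1 := by rw [h2, mul_inv_cancel₀ hx.ne']; norm_num
  -- assemble
  show (mvGaussian 0 M) Set.univ = 1
  rw [mvGaussian, withDensity_apply _ MeasurableSet.univ, Measure.restrict_univ]
  simp only [sub_zero, Fintype.card_fin]
  have hc : (0:ℝ) ≤ (2 * π) ^ (-(n : ℝ) / 2) * M.det ^ (-(1 : ℝ) / 2) := by positivity
  calc ∫⁻ z, ENNReal.ofReal ((2 * π) ^ (-(n : ℝ) / 2) * M.det ^ (-(1 : ℝ) / 2) *
        Real.exp (-(1 / 2) * (z ⬝ᵥ M⁻¹ *ᵥ z)))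
      = ∫⁻ z, ENNReal.ofReal ((2 * π) ^ (-(n : ℝ) / 2) * M.det ^ (-(1 : ℝ) / 2)) *
        ENNReal.ofReal (Real.exp (-(1 / 2) * (z ⬝ᵥ M⁻¹ *ᵥ z))) := by
        simp_rw [← ENNReal.ofReal_mul hc]
    _ = ENNReal.ofReal ((2 * π) ^ (-(n : ℝ) / 2) * M.det ^ (-(1 : ℝ) / 2)) *
        ∫⁻ z, ENNReal.ofReal (Real.exp (-(1 / 2) * (z ⬝ᵥ M⁻¹ *ᵥ z))) :=
        lintegral_const_mul' _ _ ENNReal.ofReal_ne_top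
    _ = ENNReal.ofReal ((2 * π) ^ (-(n : ℝ) / 2) * M.det ^ (-(1 : ℝ) / 2)) *
        (ENNReal.ofReal |R.det⁻¹| * ENNReal.ofReal (Real.sqrt (π / (1/2)) ^ n)) := by
        rw [hchg, hK]
    _ = ENNReal.ofReal ((2 * π) ^ (-(n : ℝ) / 2) * M.det ^ (-(1 : ℝ) / 2) *
        (|R.det⁻¹| * Real.sqrt (π / (1/2)) ^ n)) := by
        rw [← ENNReal.ofReal_mul (abs_nonneg _), ← ENNReal.ofReal_mul hc]
    _ = 1 := by rw [key, ENNReal.ofReal_one]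


lemma GPR.quad_decomp {p m : ℕ} (A : Matrix (Fin p) (Fin p) ℝ) (hA : A.PosDef)
    (B : Matrix (Fin m) (Fin p) ℝ) (C : Matrix (Fin m) (Fin m) ℝ)
    (hS : (C - B * A⁻¹ * Bᵀ).PosDef) (y : Fin p → ℝ) (f : Fin m → ℝ) :
    Sum.elim y f ⬝ᵥ (fromBlocks A Bᵀ B C)⁻¹ *ᵥ Sum.elim y f
      = y ⬝ᵥ A⁻¹ *ᵥ y + (f - B *ᵥ (A⁻¹ *ᵥ y)) ⬝ᵥ
          (C - B * A⁻¹ * Bᵀ)⁻¹ *ᵥ (f - B *ᵥ (A⁻¹ *ᵥ y)) := by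
  set S := C - B * A⁻¹ * Bᵀ with hSdef
  have hAs : Aᵀ = A := by
    have := hA.isHermitian
    rwa [Matrix.IsHermitian, Matrix.conjTranspose_eq_transpose_of_trivial] at this
  have hSs : Sᵀ = S := by
    have := hS.isHermitian
    rwa [Matrix.IsHermitian, Matrix.conjTranspose_eq_transpose_of_trivial] at this
  have hAis : A⁻¹ᵀ = A⁻¹ := by rw [Matrix.transpose_nonsing_inv, hAs]
  have hSis : S⁻¹ᵀ = S⁻¹ := by rw [Matrix.transpose_nonsing_inv, hSs]
  have hA1 : A * A⁻¹ = 1 := Matrix.mul_nonsing_inv _ hA.det_pos.ne'.isUnit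
  have hS1 : S * S⁻¹ = 1 := Matrix.mul_nonsing_inv _ hS.det_pos.ne'.isUnit
  set L : Matrix (Fin p ⊕ Fin m) (Fin p ⊕ Fin m) ℝ :=
    fromBlocks 1 0 (-(B * A⁻¹)) 1 with hLdef
  set D : Matrix (Fin p ⊕ Fin m) (Fin p ⊕ Fin m) ℝ :=
    fromBlocks A⁻¹ 0 0 S⁻¹ with hDdef
  have hLT : Lᵀ = fromBlocks 1 (-(A⁻¹ * Bᵀ)) 0 1 := by
    rw [hLdef, Matrix.fromBlocks_transpose]
    simp [Matrix.transpose_neg, Matrix.transpose_mul, hAis]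
  have hC : S + B * A⁻¹ * Bᵀ = C := sub_add_cancel C (B * A⁻¹ * Bᵀ)
  have hinv : (fromBlocks A Bᵀ B C)⁻¹ = Lᵀ * D * L := by
    apply Matrix.inv_eq_right_inv
    rw [hLT, hDdef, hLdef, ← hC, Matrix.fromBlocks_multiply, Matrix.fromBlocks_multiply,
      Matrix.fromBlocks_multiply, ← Matrix.fromBlocks_one]
    rw [Matrix.fromBlocks_inj]
    refine ⟨?_, ?_, ?_, ?_⟩
    · simp only [Matrix.mul_one, Matrix.one_mul, Matrix.mul_zero, Matrix.zero_mul,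
        add_zero, zero_add, Matrix.mul_neg, Matrix.neg_mul, Matrix.mul_add,
        Matrix.add_mul, neg_neg, ← Matrix.mul_assoc, hA1]
      abel
    · simp only [Matrix.mul_one, Matrix.one_mul, Matrix.mul_zero, Matrix.zero_mul,
        add_zero, zero_add, Matrix.mul_neg, Matrix.neg_mul, Matrix.mul_add,
        Matrix.add_mul, neg_neg, ← Matrix.mul_assoc, hA1]
      abel
    · simp only [Matrix.mul_one, Matrix.one_mul, Matrix.mul_zero, Matrix.zero_mul,
        add_zero, zero_add, Matrix.mul_neg, Matrix.neg_mul, Matrix.mul_add,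
        Matrix.add_mul, neg_neg, ← Matrix.mul_assoc, hA1, hS1]
      abel
    · simp only [Matrix.mul_one, Matrix.one_mul, Matrix.mul_zero, Matrix.zero_mul,
        add_zero, zero_add, Matrix.mul_neg, Matrix.neg_mul, Matrix.mul_add,
        Matrix.add_mul, neg_neg, ← Matrix.mul_assoc, hA1, hS1]
      abel
  rw [hinv]
  have hLz : L *ᵥ Sum.elim y f = Sum.elim y (f - B *ᵥ (A⁻¹ *ᵥ y)) := by
    rw [hLdef, Matrix.fromBlocks_mulVec]
    simp [Matrix.neg_mulVec, ← Matrix.mulVec_mulVec, neg_add_eq_sub]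
  have step1 : (Lᵀ * D * L) *ᵥ Sum.elim y f = Lᵀ *ᵥ (D *ᵥ (L *ᵥ Sum.elim y f)) := by
    rw [Matrix.mulVec_mulVec, Matrix.mulVec_mulVec]
  rw [step1, hLz]
  have step2 : Sum.elim y f ⬝ᵥ Lᵀ *ᵥ (D *ᵥ Sum.elim y (f - B *ᵥ (A⁻¹ *ᵥ y)))
      = (L *ᵥ Sum.elim y f) ⬝ᵥ (D *ᵥ Sum.elim y (f - B *ᵥ (A⁻¹ *ᵥ y))) := by
    rw [Matrix.dotProduct_mulVec, ← Matrix.transpose_transpose L, Matrix.vecMul_transpose,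
      Matrix.transpose_transpose]
  rw [step2, hLz, hDdef, Matrix.fromBlocks_mulVec]
  simp [sumElim_dotProduct_sumElim]


lemma GPR.measurable_gauss_density {ι : Type*} [Fintype ι] [DecidableEq ι]
    (c : ℝ) (M : Matrix ι ι ℝ) :
    Measurable fun z : ι → ℝ =>
      ENNReal.ofReal (c * Real.exp (-(1 / 2) * ((z - 0) ⬝ᵥ M.mulVec (z - 0)))) := by
  apply ENNReal.measurable_ofReal.comp
  apply Continuous.measurable
  simp only [sub_zero, Matrix.mulVec, dotProduct]
  fun_prop

/-- Conditional covariance and independence for a Gaussian vector: if `(Y, F)` is jointly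
centered Gaussian with covariance `[[A, Bᵀ],[B, C]]` (`A` positive definite), then
`F - B A⁻¹ Y` is independent of `Y` and its law is the centered Gaussian with covariance
`C - B A⁻¹ Bᵀ`. This underlies the GPR conditional-covariance formula. -/
theorem gaussian_conditional_covariance_independence
    {Ω : Type*} {mΩ : MeasurableSpace Ω} (P : Measure Ω) [IsProbabilityMeasure P]
    (p m : ℕ) (hp : 1 ≤ p) (hm : 1 ≤ m)
    (A : Matrix (Fin p) (Fin p) ℝ) (hA : A.PosDef)
    (C : Matrix (Fin m) (Fin m) ℝ) (hC : C.IsSymm)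
    (B : Matrix (Fin m) (Fin p) ℝ)
    (hBlk : (Matrix.fromBlocks A Bᵀ B C).PosSemidef)
    (W : Ω → (Fin p ⊕ Fin m) → ℝ) (hW : Measurable W)
    (hlaw : Measure.map W P = mvGaussian 0 (Matrix.fromBlocks A Bᵀ B C)) :
    IndepFun
      (fun ω (j : Fin m) =>
        W ω (Sum.inr j) - B.mulVec (A⁻¹.mulVec fun i => W ω (Sum.inl i)) j)
      (fun ω (i : Fin p) => W ω (Sum.inl i)) P ∧
    Measure.map
      (fun ω (j : Fin m) =>
        W ω (Sum.inr j) - B.mulVec (A⁻¹.mulVec fun i => W ω (Sum.inl i)) j) P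
      = mvGaussian 0 (C - B * A⁻¹ * Bᵀ) := by
  classical
  set Sg : Matrix (Fin p ⊕ Fin m) (Fin p ⊕ Fin m) ℝ := Matrix.fromBlocks A Bᵀ B C with hSgdef
  -- mass of the law is 1
  have hmass : mvGaussian 0 Sg Set.univ = 1 := by
    rw [← hlaw, Measure.map_apply hW MeasurableSet.univ, Set.preimage_univ, measure_univ]
  -- Σ is positive definite
  have hdetSg : Sg.det ≠ 0 := by
    intro h
    have hz : mvGaussian (0 : (Fin p ⊕ Fin m) → ℝ) Sg = 0 := by
      rw [mvGaussian]
      have : (fun z : (Fin p ⊕ Fin m) → ℝ =>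
          ENNReal.ofReal ((2 * π) ^ (-(Fintype.card (Fin p ⊕ Fin m) : ℝ) / 2) *
            Sg.det ^ (-(1 : ℝ) / 2) *
            Real.exp (-(1 / 2) * ((z - 0) ⬝ᵥ Sg⁻¹.mulVec (z - 0))))) = 0 := by
        funext z
        rw [h, Real.zero_rpow (by norm_num : (-(1:ℝ)/2) ≠ 0)]
        simp
      rw [this, withDensity_zero]
    rw [hz] at hmass
    simp at hmass
  have hSgpd : Sg.PosDef := GPR.posDef_of_posSemidef_det_ne_zero hBlk hdetSg
  -- Schur complement S is positive definite
  haveI : Invertible A := A.invertibleOfIsUnitDet hA.det_pos.ne'.isUnit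
  set S : Matrix (Fin m) (Fin m) ℝ := C - B * A⁻¹ * Bᵀ with hSdef
  have hBt : (Bᵀ)ᴴ = B := by
    rw [Matrix.conjTranspose_eq_transpose_of_trivial, Matrix.transpose_transpose]
  have hSpsd : S.PosSemidef := by
    have hBlk' : (Matrix.fromBlocks A Bᵀ (Bᵀ)ᴴ C).PosSemidef := by rwa [hBt]
    have := (Matrix.PosDef.fromBlocks₁₁ Bᵀ C hA).mp hBlk'
    rwa [hBt] at this
  have hdetS : S.det ≠ 0 := by
    have hdf : Sg.det = A.det * (C - B * ⅟A * Bᵀ).det :=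
      Matrix.det_fromBlocks₁₁ A Bᵀ B C
    rw [Matrix.invOf_eq_nonsing_inv] at hdf
    intro h
    rw [hdf, ← hSdef, h, mul_zero] at hdetSg
    exact hdetSg rfl
  have hSpd : S.PosDef := GPR.posDef_of_posSemidef_det_ne_zero hSpsd hdetS
  have hdetprod : Sg.det = A.det * S.det := by
    have hdf : Sg.det = A.det * (C - B * ⅟A * Bᵀ).det := Matrix.det_fromBlocks₁₁ A Bᵀ B C
    rwa [Matrix.invOf_eq_nonsing_inv] at hdf
  -- probability measures
  haveI hPA : IsProbabilityMeasure (mvGaussian (0 : Fin p → ℝ) A) :=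
    GPR.isProbability_mvGaussian A hA
  haveI hPS : IsProbabilityMeasure (mvGaussian (0 : Fin m → ℝ) S) :=
    GPR.isProbability_mvGaussian S hSpd
  -- densities
  set ρA : (Fin p → ℝ) → ℝ≥0∞ := fun z =>
    ENNReal.ofReal ((2 * π) ^ (-(Fintype.card (Fin p) : ℝ) / 2) * A.det ^ (-(1 : ℝ) / 2) *
      Real.exp (-(1 / 2) * ((z - 0) ⬝ᵥ A⁻¹.mulVec (z - 0)))) with hrAdef
  set ρS : (Fin m → ℝ) → ℝ≥0∞ := fun z =>
    ENNReal.ofReal ((2 * π) ^ (-(Fintype.card (Fin m) : ℝ) / 2) * S.det ^ (-(1 : ℝ) / 2) *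
      Real.exp (-(1 / 2) * ((z - 0) ⬝ᵥ S⁻¹.mulVec (z - 0)))) with hrSdef
  set ρG : ((Fin p ⊕ Fin m) → ℝ) → ℝ≥0∞ := fun z =>
    ENNReal.ofReal ((2 * π) ^ (-(Fintype.card (Fin p ⊕ Fin m) : ℝ) / 2) *
      Sg.det ^ (-(1 : ℝ) / 2) *
      Real.exp (-(1 / 2) * ((z - 0) ⬝ᵥ Sg⁻¹.mulVec (z - 0)))) with hrGdef
  have hmvA : mvGaussian (0 : Fin p → ℝ) A = volume.withDensity ρA := rfl
  have hmvS : mvGaussian (0 : Fin m → ℝ) S = volume.withDensity ρS := rfl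
  have hmvG : mvGaussian (0 : (Fin p ⊕ Fin m) → ℝ) Sg = volume.withDensity ρG := rfl
  have hrA : Measurable ρA := GPR.measurable_gauss_density _ _
  have hrS : Measurable ρS := GPR.measurable_gauss_density _ _
  have hrG : Measurable ρG := GPR.measurable_gauss_density _ _
  -- the measurable equivalences
  let e : ((Fin p ⊕ Fin m) → ℝ) ≃ᵐ (Fin p → ℝ) × (Fin m → ℝ) :=
    MeasurableEquiv.sumPiEquivProdPi (fun _ => ℝ)
  have hBAcont : Continuous fun v : Fin p → ℝ => (B * A⁻¹) *ᵥ v := by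
    have h := LinearMap.continuous_of_finiteDimensional (B * A⁻¹).mulVecLin
    have : ⇑(B * A⁻¹).mulVecLin = fun v : Fin p → ℝ => (B * A⁻¹) *ᵥ v := by
      funext v
      rw [Matrix.mulVecLin_apply]
    rwa [this] at h
  let τ : ((Fin p → ℝ) × (Fin m → ℝ)) ≃ᵐ ((Fin m → ℝ) × (Fin p → ℝ)) :=
    { toFun := fun w => (w.2 - (B * A⁻¹) *ᵥ w.1, w.1)
      invFun := fun w => (w.2, w.1 + (B * A⁻¹) *ᵥ w.2)
      left_inv := fun w => by simp
      right_inv := fun w => by simp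
      measurable_toFun :=
        (measurable_snd.sub (hBAcont.measurable.comp measurable_fst)).prodMk measurable_fst
      measurable_invFun :=
        measurable_snd.prodMk (measurable_fst.add (hBAcont.measurable.comp measurable_snd)) }
  let Φf : ((Fin p ⊕ Fin m) → ℝ) ≃ᵐ ((Fin m → ℝ) × (Fin p → ℝ)) := e.trans τ
  -- measure preservation
  have he : MeasurePreserving e volume volume := by
    have h := MeasureTheory.volume_measurePreserving_sumPiEquivProdPi_symm
      (fun _ : Fin p ⊕ Fin m => ℝ)
    have h2 := h.symm
    simpa using h2
  have hτ : MeasurePreserving τ volume volume := by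
    rw [Measure.volume_eq_prod, Measure.volume_eq_prod]
    have hσ : MeasurePreserving
        (fun w : (Fin p → ℝ) × (Fin m → ℝ) => (w.1, w.2 - (B * A⁻¹) *ᵥ w.1))
        (volume.prod volume) (volume.prod volume) := by
      apply MeasurePreserving.skew_product (g := fun a c => c - (B * A⁻¹) *ᵥ a)
        (MeasurePreserving.id volume)
        (measurable_snd.sub (hBAcont.measurable.comp measurable_fst))
      refine Filter.Eventually.of_forall fun a => ?_
      simp_rw [sub_eq_add_neg]
      exact map_add_right_eq_self volume _
    have hswap : MeasurePreserving (Prod.swap : (Fin p → ℝ) × (Fin m → ℝ) → _)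
        (volume.prod volume) (volume.prod volume) := Measure.measurePreserving_swap
    exact hswap.comp hσ
  have hΦ : MeasurePreserving Φf volume volume := hτ.comp he
  -- pushforward of the joint law under Φf
  have hesymm : ∀ (yv : Fin p → ℝ) (fv : Fin m → ℝ), e.symm (yv, fv) = Sum.elim yv fv := by
    intro yv fv
    funext x
    cases x <;> rfl
  have h2pi : (0:ℝ) < 2 * π := by positivity
  have hdens : ∀ w : (Fin m → ℝ) × (Fin p → ℝ), ρG (Φf.symm w) = ρS w.1 * ρA w.2 := by
    intro w
    have hΦsymm : Φf.symm w = e.symm (w.2, w.1 + (B * A⁻¹) *ᵥ w.2) := rfl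
    rw [hΦsymm, hesymm]
    set y := w.2
    set gv := w.1
    set f := gv + (B * A⁻¹) *ᵥ y with hfdef
    have hquad := GPR.quad_decomp A hA B C hSpd y f
    have hg : f - B *ᵥ (A⁻¹ *ᵥ y) = gv := by
      rw [hfdef, ← Matrix.mulVec_mulVec, add_sub_cancel_right]
    rw [hg] at hquad
    have hcard : (Fintype.card (Fin p ⊕ Fin m) : ℝ) = (p : ℝ) + (m : ℝ) := by
      simp [Fintype.card_sum]
    have hconst : (2 * π) ^ (-(Fintype.card (Fin p ⊕ Fin m) : ℝ) / 2) *
        Sg.det ^ (-(1 : ℝ) / 2)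
        = ((2 * π) ^ (-(Fintype.card (Fin m) : ℝ) / 2) * S.det ^ (-(1 : ℝ) / 2)) *
          ((2 * π) ^ (-(Fintype.card (Fin p) : ℝ) / 2) * A.det ^ (-(1 : ℝ) / 2)) := by
      rw [hcard, hdetprod, Real.mul_rpow hA.det_pos.le hSpd.det_pos.le,
        show -((p : ℝ) + (m : ℝ)) / 2 = -(Fintype.card (Fin m) : ℝ) / 2 +
          -(Fintype.card (Fin p) : ℝ) / 2 by simp; ring,
        Real.rpow_add h2pi]
      ring
    simp only [hrGdef, hrSdef, hrAdef, sub_zero]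
    rw [hquad, hconst]
    rw [show -(1 / 2 : ℝ) * (y ⬝ᵥ A⁻¹ *ᵥ y + gv ⬝ᵥ S⁻¹ *ᵥ gv)
        = -(1 / 2) * (gv ⬝ᵥ S⁻¹ *ᵥ gv) + -(1 / 2) * (y ⬝ᵥ A⁻¹ *ᵥ y) by ring,
      Real.exp_add]
    rw [← ENNReal.ofReal_mul (mul_nonneg (mul_nonneg (Real.rpow_nonneg (by positivity) _)
      (Real.rpow_nonneg hSpd.det_pos.le _)) (Real.exp_pos _).le)]
    congr 1
    ring
  have hmapW : Measure.map Φf (Measure.map W P)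
      = (mvGaussian (0 : Fin m → ℝ) S).prod (mvGaussian (0 : Fin p → ℝ) A) := by
    rw [hlaw, hmvG, GPR.map_withDensity Φf volume ρG hrG, hΦ.map_eq]
    have : (fun b => ρG (Φf.symm b)) = fun w : (Fin m → ℝ) × (Fin p → ℝ) => ρS w.1 * ρA w.2 :=
      funext hdens
    rw [this, hmvS, hmvA]
    rw [Measure.volume_eq_prod]
    exact (GPR.withDensity_prod volume volume ρS ρA hrS hrA).symm
  -- the random vectors
  set Y : Ω → Fin p → ℝ := fun ω i => W ω (Sum.inl i) with hYdef
  set G : Ω → Fin m → ℝ := fun ω (j : Fin m) =>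
    W ω (Sum.inr j) - B.mulVec (A⁻¹.mulVec fun i => W ω (Sum.inl i)) j with hGdef
  have hYmeas : Measurable Y :=
    measurable_pi_lambda _ fun i => (measurable_pi_apply _).comp hW
  have hGmeas : Measurable G := by
    apply measurable_pi_lambda _ fun j => ?_
    have h1 : Measurable fun ω => W ω (Sum.inr j) := (measurable_pi_apply _).comp hW
    have h2 : Measurable fun ω => B.mulVec (A⁻¹.mulVec fun i => W ω (Sum.inl i)) j := by
      have : (fun ω => B.mulVec (A⁻¹.mulVec fun i => W ω (Sum.inl i)) j)
          = fun ω => ((B * A⁻¹) *ᵥ Y ω) j := by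
        funext ω
        rw [← Matrix.mulVec_mulVec]
      rw [this]
      exact ((continuous_apply j).comp hBAcont).measurable.comp hYmeas
    exact h1.sub h2
  have hpair : (fun ω => (G ω, Y ω)) = ⇑Φf ∘ W := by
    funext ω
    show (G ω, Y ω) = τ (e (W ω))
    have he1 : e (W ω) = (fun i => W ω (Sum.inl i), fun j => W ω (Sum.inr j)) := rfl
    rw [he1]
    refine Prod.ext ?_ rfl
    show G ω = (fun j => W ω (Sum.inr j)) - (B * A⁻¹) *ᵥ (fun i => W ω (Sum.inl i))
    funext j
    simp only [hGdef, Pi.sub_apply]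
    rw [← Matrix.mulVec_mulVec]
  have hmaplaw : Measure.map (fun ω => (G ω, Y ω)) P
      = (mvGaussian (0 : Fin m → ℝ) S).prod (mvGaussian (0 : Fin p → ℝ) A) := by
    rw [hpair, ← Measure.map_map Φf.measurable hW, hmapW]
  have hmapG : Measure.map G P = mvGaussian (0 : Fin m → ℝ) S := by
    have hfst : G = Prod.fst ∘ (fun ω => (G ω, Y ω)) := rfl
    rw [hfst, ← Measure.map_map measurable_fst (hGmeas.prodMk hYmeas), hmaplaw,
      Measure.map_fst_prod, measure_univ, one_smul]
  have hmapY : Measure.map Y P = mvGaussian (0 : Fin p → ℝ) A := by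
    have hsnd : Y = Prod.snd ∘ (fun ω => (G ω, Y ω)) := rfl
    rw [hsnd, ← Measure.map_map measurable_snd (hGmeas.prodMk hYmeas), hmaplaw,
      Measure.map_snd_prod, measure_univ, one_smul]
  refine ⟨?_, hmapG⟩
  rw [indepFun_iff_map_prod_eq_prod_map_map hGmeas.aemeasurable hYmeas.aemeasurable,
    hmaplaw, hmapG, hmapY]
end
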